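/- Let a, b, c be nonzero squarefree pairwise coprime integers and p an odd prime not dividing abc. Then ax² + by² + cz² = 0 has a nonzero solution over ℚ_p. -/

import Mathlib

open Polynomial

private lemma aux_dvd_zmod {p : ℕ} [Fact p.Prime] (k : ℤ) :
    (p : ℤ) ∣ k ↔ (k : ZMod p) = 0 := (ZMod.intCast_zmod_eq_zero_iff_dvd k p).symm

/-- Hensel lifting step: if `A x₀² + B ≡ 0 mod p` with `x₀ ≢ 0`, `p ∤ A`, `p ≠ 2`,
then `A x² + B = 0` has a solution in `ℚ_[p]`. -/
private lemma aux_hensel {p : ℕ} [Fact p.Prime] (hodd : p ≠ 2) (A B : ℤ)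
    (hA : ¬ (p : ℤ) ∣ A) (x0 : ZMod p) (hx0 : x0 ≠ 0)
    (hroot : (A : ZMod p) * x0 ^ 2 + (B : ZMod p) = 0) :
    ∃ x : ℚ_[p], (A : ℚ_[p]) * x ^ 2 + (B : ℚ_[p]) = 0 := by
  have hp : p.Prime := Fact.out
  set n : ℤ := (x0.val : ℤ) with hn
  have hncast : ((n : ℤ) : ZMod p) = x0 := by
    rw [hn, Int.cast_natCast, ZMod.natCast_val, ZMod.cast_id]
  set F : Polynomial ℤ_[p] := C (A : ℤ_[p]) * X ^ 2 + C (B : ℤ_[p]) with hF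
  have hevalF : ∀ t : ℤ_[p], F.eval t = (A : ℤ_[p]) * t ^ 2 + (B : ℤ_[p]) := by
    intro t; simp [hF]
  have hderiv : F.derivative = C ((2 * A : ℤ) : ℤ_[p]) * X := by
    simp [hF]; ring_nf; simp only [map_ofNat]
  -- norms
  have heval_lt : ‖F.eval ((n : ℤ_[p]))‖ < 1 := by
    rw [hevalF]
    have : ((A : ℤ_[p]) * (n : ℤ_[p]) ^ 2 + (B : ℤ_[p])) = ((A * n ^ 2 + B : ℤ) : ℤ_[p]) := by
      push_cast; ring
    rw [this, PadicInt.norm_int_lt_one_iff_dvd]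
    rw [aux_dvd_zmod]
    push_cast
    rw [hncast, hroot]
  have hderiv_ne : ¬ (p : ℤ) ∣ 2 * A * n := by
    rw [aux_dvd_zmod]
    push_cast
    rw [hncast]
    intro h
    rcases mul_eq_zero.mp h with h1 | h1
    · rcases mul_eq_zero.mp h1 with h2 | h2
      · have : ((2 : ℕ) : ZMod p) = 0 := by exact_mod_cast h2
        rw [ZMod.natCast_eq_zero_iff] at this
        exact hodd ((Nat.prime_dvd_prime_iff_eq hp Nat.prime_two).mp this)
      · exact hA ((aux_dvd_zmod A).mpr h2)
    · exact hx0 h1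
  have hderiv_norm : ‖F.derivative.eval ((n : ℤ_[p]))‖ = 1 := by
    rw [hderiv]
    have : (C ((2 * A : ℤ) : ℤ_[p]) * X).eval ((n : ℤ_[p])) = ((2 * A * n : ℤ) : ℤ_[p]) := by
      push_cast; simp
    rw [this]
    refine le_antisymm (PadicInt.norm_le_one _) (not_lt.mp ?_)
    rw [PadicInt.norm_int_lt_one_iff_dvd]
    exact hderiv_ne
  have hhyp : ‖F.eval ((n : ℤ_[p]))‖ < ‖F.derivative.eval ((n : ℤ_[p]))‖ ^ 2 := by
    rw [hderiv_norm]; simpa using heval_lt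
  obtain ⟨z, hz, -⟩ := hensels_lemma hhyp
  rw [coe_aeval_eq_eval, hevalF] at hz
  refine ⟨(z : ℚ_[p]), ?_⟩
  have := congrArg (fun t : ℤ_[p] => (t : ℚ_[p])) hz
  push_cast at this ⊢
  exact this

theorem stmt_14 (a b c : ℤ) (p : ℕ) [Fact p.Prime] (hodd : p ≠ 2)
    (ha : a ≠ 0) (hb : b ≠ 0) (hc : c ≠ 0)
    (hsa : Squarefree a) (hsb : Squarefree b) (hsc : Squarefree c)
    (hab : IsCoprime a b) (hbc : IsCoprime b c) (hca : IsCoprime c a)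
    (hnd : ¬ (p : ℤ) ∣ a * b * c) :
    ∃ x y z : ℚ_[p], (x, y, z) ≠ (0, 0, 0) ∧
      (a : ℚ_[p]) * x ^ 2 + (b : ℚ_[p]) * y ^ 2 + (c : ℚ_[p]) * z ^ 2 = 0 := by
  have hp : p.Prime := Fact.out
  have hpa : ¬ (p : ℤ) ∣ a := fun h => hnd ((h.mul_right b).mul_right c)
  have hpb : ¬ (p : ℤ) ∣ b := fun h => hnd ((h.mul_left a).mul_right c)
  have hpc : ¬ (p : ℤ) ∣ c := fun h => hnd (h.mul_left (a * b))
  have hZa : ((a : ZMod p)) ≠ 0 := fun h => hpa ((aux_dvd_zmod a).mpr h)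
  have hZb : ((b : ZMod p)) ≠ 0 := fun h => hpb ((aux_dvd_zmod b).mpr h)
  have hZc : ((c : ZMod p)) ≠ 0 := fun h => hpc ((aux_dvd_zmod c).mpr h)
  -- a solution mod p
  have hcard : Fintype.card (ZMod p) % 2 = 1 := by
    rw [ZMod.card]
    exact Nat.odd_iff.mp (hp.odd_of_ne_two hodd)
  obtain ⟨x0, y0, hxy⟩ := FiniteField.exists_root_sum_quadratic
    (f := C (a : ZMod p) * X ^ 2) (g := C (b : ZMod p) * X ^ 2 + C (c : ZMod p))
    (by simpa using Polynomial.degree_C_mul_X_pow 2 hZa)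
    (by
      rw [Polynomial.degree_add_eq_left_of_degree_lt]
      · simpa using Polynomial.degree_C_mul_X_pow 2 hZb
      · rw [Polynomial.degree_C_mul_X_pow 2 hZb]
        exact lt_of_le_of_lt (Polynomial.degree_C_le) (by norm_num))
    hcard
  simp only [eval_add, eval_mul, eval_pow, eval_C, eval_X] at hxy
  by_cases hx0 : x0 = 0
  · -- then b y0^2 + c = 0 mod p, and y0 ≠ 0
    rw [hx0] at hxy
    norm_num at hxy
    have hy0 : y0 ≠ 0 := by
      intro h
      rw [h] at hxy
      simp at hxy
      exact hZc (by simpa using hxy)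
    have hroot : (b : ZMod p) * y0 ^ 2 + (c : ZMod p) = 0 := by
      linear_combination hxy
    obtain ⟨y, hy⟩ := aux_hensel hodd b c hpb y0 hy0 hroot
    refine ⟨0, y, 1, by simp, ?_⟩
    simpa using hy
  · -- Hensel in x, with B = b * y0.val ^ 2 + c
    set B : ℤ := b * (y0.val : ℤ) ^ 2 + c with hB
    have hroot : (a : ZMod p) * x0 ^ 2 + (B : ZMod p) = 0 := by
      rw [hB]
      push_cast
      rw [ZMod.natCast_val, ZMod.cast_id]
      linear_combination hxy
    obtain ⟨x, hx⟩ := aux_hensel hodd a B hpa x0 hx0 hroot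
    refine ⟨x, ((y0.val : ℤ) : ℚ_[p]), 1, by simp, ?_⟩
    rw [hB] at hx
    push_cast at hx ⊢
    linear_combination hx
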